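/- In a hemiring R, every fuzzy h-ideal of R is idempotent (λ ⊙_h λ = λ) if and only if λ ⊙_h μ = min(λ,μ) for all fuzzy h-ideals λ, μ of R. -/

import Mathlib

open Pointwise

def IsLeftHIdeal {R : Type*} [NonUnitalSemiring R] (I : Set R) : Prop :=
  I.Nonempty ∧ (∀ a ∈ I, ∀ b ∈ I, a + b ∈ I) ∧
    (∀ r : R, ∀ a ∈ I, r * a ∈ I) ∧
    (∀ a ∈ I, ∀ b ∈ I, ∀ x y : R, x + a + y = b + y → x ∈ I)

def IsRightHIdeal {R : Type*} [NonUnitalSemiring R] (I : Set R) : Prop :=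
  I.Nonempty ∧ (∀ a ∈ I, ∀ b ∈ I, a + b ∈ I) ∧
    (∀ r : R, ∀ a ∈ I, a * r ∈ I) ∧
    (∀ a ∈ I, ∀ b ∈ I, ∀ x y : R, x + a + y = b + y → x ∈ I)

def IsHIdeal {R : Type*} [NonUnitalSemiring R] (I : Set R) : Prop :=
  I.Nonempty ∧ (∀ a ∈ I, ∀ b ∈ I, a + b ∈ I) ∧
    (∀ r : R, ∀ a ∈ I, r * a ∈ I) ∧ (∀ r : R, ∀ a ∈ I, a * r ∈ I) ∧
    (∀ a ∈ I, ∀ b ∈ I, ∀ x y : R, x + a + y = b + y → x ∈ I)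

def hCl {R : Type*} [NonUnitalSemiring R] (A : Set R) : Set R :=
  {x | ∃ a ∈ A, ∃ b ∈ A, ∃ y : R, x + a + y = b + y}

def IsFuzzyLeftHIdeal {R : Type*} [NonUnitalSemiring R] (lam : R → ℝ) : Prop :=
  (∀ x : R, 0 ≤ lam x ∧ lam x ≤ 1) ∧
  (∀ a b : R, min (lam a) (lam b) ≤ lam (a + b)) ∧
  (∀ a b : R, lam b ≤ lam (a * b)) ∧
  (∀ a b x y : R, x + a + y = b + y → min (lam a) (lam b) ≤ lam x)

def IsFuzzyHIdeal {R : Type*} [NonUnitalSemiring R] (lam : R → ℝ) : Prop :=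
  (∀ x : R, 0 ≤ lam x ∧ lam x ≤ 1) ∧
  (∀ a b : R, min (lam a) (lam b) ≤ lam (a + b)) ∧
  (∀ a b : R, max (lam a) (lam b) ≤ lam (a * b)) ∧
  (∀ a b x y : R, x + a + y = b + y → min (lam a) (lam b) ≤ lam x)

noncomputable def hIntrinsicProd {R : Type*} [NonUnitalSemiring R] (lam mu : R → ℝ) : R → ℝ :=
  fun x => sSup ({0} ∪ {v : ℝ | ∃ (m n : ℕ) (a b : Fin (m + 1) → R) (c d : Fin (n + 1) → R)
    (z : R), x + (∑ i, a i * b i) + z = (∑ j, c j * d j) + z ∧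
      v = min (Finset.univ.inf' Finset.univ_nonempty (fun i => min (lam (a i)) (mu (b i))))
              (Finset.univ.inf' Finset.univ_nonempty (fun j => min (lam (c j)) (mu (d j))))})

section Aux
variable {R : Type*} [NonUnitalSemiring R]

def prodSet (lam mu : R → ℝ) (x : R) : Set ℝ :=
  {0} ∪ {v : ℝ | ∃ (m n : ℕ) (a b : Fin (m + 1) → R) (c d : Fin (n + 1) → R)
    (z : R), x + (∑ i, a i * b i) + z = (∑ j, c j * d j) + z ∧
      v = min (Finset.univ.inf' Finset.univ_nonempty (fun i => min (lam (a i)) (mu (b i))))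
              (Finset.univ.inf' Finset.univ_nonempty (fun j => min (lam (c j)) (mu (d j))))}

lemma hIntrinsicProd_eq (lam mu : R → ℝ) (x : R) :
    hIntrinsicProd lam mu x = sSup (prodSet lam mu x) := rfl

lemma prodSet_nonempty (lam mu : R → ℝ) (x : R) : (prodSet lam mu x).Nonempty :=
  ⟨0, Or.inl rfl⟩

lemma prodSet_bddAbove {lam mu : R → ℝ} (h1 : ∀ x : R, lam x ≤ 1) (x : R) :
    BddAbove (prodSet lam mu x) := by
  refine ⟨1, fun v hv => ?_⟩
  rcases hv with h0 | ⟨m, n, a, b, c, d, z, heq, hv⟩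
  · simp_all
  · subst hv
    calc min (Finset.univ.inf' Finset.univ_nonempty (fun i => min (lam (a i)) (mu (b i))))
          (Finset.univ.inf' Finset.univ_nonempty (fun j => min (lam (c j)) (mu (d j))))
        ≤ Finset.univ.inf' Finset.univ_nonempty (fun i => min (lam (a i)) (mu (b i))) :=
          min_le_left _ _
      _ ≤ min (lam (a 0)) (mu (b 0)) := Finset.inf'_le _ (Finset.mem_univ 0)
      _ ≤ lam (a 0) := min_le_left _ _
      _ ≤ 1 := h1 _

lemma myInf'_mono {ι : Type*} (s : Finset ι) (hs : s.Nonempty) {f g : ι → ℝ}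
    (h : ∀ i ∈ s, f i ≤ g i) : s.inf' hs f ≤ s.inf' hs g :=
  Finset.le_inf' _ _ (fun i hi => le_trans (Finset.inf'_le _ hi) (h i hi))

lemma inf'_le_lam_sum {lam : R → ℝ}
    (h2 : ∀ a b : R, min (lam a) (lam b) ≤ lam (a + b))
    {ι : Type*} (s : Finset ι) (hs : s.Nonempty) (f : ι → R) :
    s.inf' hs (fun i => lam (f i)) ≤ lam (∑ i ∈ s, f i) := by
  induction hs using Finset.Nonempty.cons_induction with
  | singleton a => simp
  | cons a s ha hs ih =>
    rw [Finset.inf'_cons (H := hs), Finset.sum_cons]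
    exact le_trans (min_le_min le_rfl ih) (h2 _ _)

lemma mem_prodSet_le {lam mu : R → ℝ} (hl : IsFuzzyHIdeal lam) (hm : IsFuzzyHIdeal mu)
    {x : R} {v : ℝ} (hv : v ∈ prodSet lam mu x) : v ≤ min (lam x) (mu x) := by
  obtain ⟨hl1, hl2, hl3, hl4⟩ := hl
  obtain ⟨hm1, hm2, hm3, hm4⟩ := hm
  rcases hv with h0 | ⟨m, n, a, b, c, d, z, heq, hv⟩
  · rcases h0 with rfl
    exact le_min (hl1 x).1 (hm1 x).1
  · subst hv
    set I1 := Finset.univ.inf' (Finset.univ_nonempty (α := Fin (m+1)))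
        (fun i => min (lam (a i)) (mu (b i))) with hI1
    set I2 := Finset.univ.inf' (Finset.univ_nonempty (α := Fin (n+1)))
        (fun j => min (lam (c j)) (mu (d j))) with hI2
    have key : ∀ (nu : R → ℝ), (∀ a b : R, min (nu a) (nu b) ≤ nu (a + b)) →
        (∀ a b : R, max (nu a) (nu b) ≤ nu (a * b)) →
        (∀ p q x y : R, x + p + y = q + y → min (nu p) (nu q) ≤ nu x) →
        (∀ i, min (lam (a i)) (mu (b i)) ≤ nu (a i * b i)) →
        (∀ j, min (lam (c j)) (mu (d j)) ≤ nu (c j * d j)) →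
        min I1 I2 ≤ nu x := by
      intro nu n2 n3 n4 hab hcd
      have hA : I1 ≤ nu (∑ i, a i * b i) := by
        refine le_trans ?_ (inf'_le_lam_sum n2 Finset.univ Finset.univ_nonempty (fun i => a i * b i))
        exact myInf'_mono _ _ (fun i _ => hab i)
      have hC : I2 ≤ nu (∑ j, c j * d j) := by
        refine le_trans ?_ (inf'_le_lam_sum n2 Finset.univ Finset.univ_nonempty (fun j => c j * d j))
        exact myInf'_mono _ _ (fun j _ => hcd j)
      exact le_trans (min_le_min hA hC) (n4 _ _ _ _ heq)
    refine le_min ?_ ?_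
    · exact key lam hl2 hl3 hl4
        (fun i => le_trans (min_le_left _ _) (le_trans (le_max_left _ _) (hl3 _ _)))
        (fun j => le_trans (min_le_left _ _) (le_trans (le_max_left _ _) (hl3 _ _)))
    · exact key mu hm2 hm3 hm4
        (fun i => le_trans (min_le_right _ _) (le_trans (le_max_right _ _) (hm3 _ _)))
        (fun j => le_trans (min_le_right _ _) (le_trans (le_max_right _ _) (hm3 _ _)))

lemma prod_le_min {lam mu : R → ℝ} (hl : IsFuzzyHIdeal lam) (hm : IsFuzzyHIdeal mu)
    (x : R) : hIntrinsicProd lam mu x ≤ min (lam x) (mu x) := by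
  rw [hIntrinsicProd_eq]
  exact csSup_le (prodSet_nonempty _ _ _) (fun v hv => mem_prodSet_le hl hm hv)

lemma prod_mono {lam mu lam' mu' : R → ℝ} (h1 : ∀ x : R, lam x ≤ 1)
    (hll : ∀ x, lam' x ≤ lam x) (hmm : ∀ x, mu' x ≤ mu x) (x : R) :
    hIntrinsicProd lam' mu' x ≤ hIntrinsicProd lam mu x := by
  rw [hIntrinsicProd_eq, hIntrinsicProd_eq]
  refine csSup_le (prodSet_nonempty _ _ _) (fun v hv => ?_)
  rcases hv with h0 | ⟨m, n, a, b, c, d, z, heq, hv⟩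
  · rcases h0 with rfl
    exact le_csSup (prodSet_bddAbove h1 x) (Or.inl rfl)
  · subst hv
    refine le_trans ?_ (le_csSup (prodSet_bddAbove h1 x)
      (Or.inr ⟨m, n, a, b, c, d, z, heq, rfl⟩))
    exact min_le_min
      (myInf'_mono _ _ (fun i _ => min_le_min (hll _) (hmm _)))
      (myInf'_mono _ _ (fun j _ => min_le_min (hll _) (hmm _)))

lemma min_isFuzzyHIdeal {lam mu : R → ℝ} (hl : IsFuzzyHIdeal lam) (hm : IsFuzzyHIdeal mu) :
    IsFuzzyHIdeal (fun x => min (lam x) (mu x)) := by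
  obtain ⟨hl1, hl2, hl3, hl4⟩ := hl
  obtain ⟨hm1, hm2, hm3, hm4⟩ := hm
  refine ⟨fun x => ⟨le_min (hl1 x).1 (hm1 x).1, le_trans (min_le_left _ _) (hl1 x).2⟩,
    fun a b => ?_, fun a b => ?_, fun a b x y h => ?_⟩
  · refine le_min (le_trans ?_ (hl2 a b)) (le_trans ?_ (hm2 a b)) <;>
      simp [min_le_left, min_le_right, le_min_iff]
  · refine max_le (le_min ?_ ?_) (le_min ?_ ?_)
    · exact le_trans (min_le_left _ _) (le_trans (le_max_left _ _) (hl3 a b))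
    · exact le_trans (min_le_right _ _) (le_trans (le_max_left _ _) (hm3 a b))
    · exact le_trans (min_le_left _ _) (le_trans (le_max_right _ _) (hl3 a b))
    · exact le_trans (min_le_right _ _) (le_trans (le_max_right _ _) (hm3 a b))
  · refine le_min (le_trans ?_ (hl4 a b x y h)) (le_trans ?_ (hm4 a b x y h))
    · exact min_le_min (min_le_left _ _) (min_le_left _ _)
    · exact min_le_min (min_le_right _ _) (min_le_right _ _)

end Aux

theorem stmt_11 {R : Type*} [NonUnitalSemiring R] :
    (∀ lam : R → ℝ, IsFuzzyHIdeal lam → hIntrinsicProd lam lam = lam) ↔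
      (∀ lam mu : R → ℝ, IsFuzzyHIdeal lam → IsFuzzyHIdeal mu →
        hIntrinsicProd lam mu = fun x => min (lam x) (mu x)) := by
  constructor
  · intro H lam mu hl hm
    funext x
    refine le_antisymm (prod_le_min hl hm x) ?_
    have hnu : IsFuzzyHIdeal (fun x => min (lam x) (mu x)) := min_isFuzzyHIdeal hl hm
    have hidem := H _ hnu
    have h1 : hIntrinsicProd (fun x => min (lam x) (mu x)) (fun x => min (lam x) (mu x)) x
        ≤ hIntrinsicProd lam mu x :=
      prod_mono (fun y => (hl.1 y).2) (fun y => min_le_left _ _) (fun y => min_le_right _ _) x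
    calc min (lam x) (mu x)
        = hIntrinsicProd (fun x => min (lam x) (mu x)) (fun x => min (lam x) (mu x)) x := by
          rw [hidem]
      _ ≤ hIntrinsicProd lam mu x := h1
  · intro H lam hl
    have := H lam lam hl hl
    rw [this]
    funext x
    simp
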